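/- Let 0 → A → B → C → 0, with maps f : A → B and g : B → C, be an almost split conflation in C. Let 0 → A → I → W → 0, with maps e : A → I and c : I → W, be a conflation of C such that I is C-injective and e is an injective envelope in C (i.e., every endomorphism φ : I → I with φ ∘ e = e is an automorphism). Let e′ : B → I be a map with e′ ∘ f = e (such e′ exists since I is C-injective and f is an inflation of C), and let d : I ⊕ C → W be the map whose restriction to I is c and whose restriction to C is the unique map d₂ : C → W with d₂ ∘ g = −c ∘ e′ (which exists since c ∘ e′ ∘ f = c ∘ e = 0). Then the sequence 0 → (c : I → W) → (d : I ⊕ C → W) → (C → 0) → 0 in the epimorphism category F(C), whose first map is the arrow morphism (inl, 𝟙_W) and whose second map is the arrow morphism ([0,1], 0), is an almost split conflation in F(C). -/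

import Mathlib

open CategoryTheory CategoryTheory.Limits

universe u

section Defs
variable {Λ : Type u} [Ring Λ]

/-- A short exact sequence `0 → X → Y → Z → 0` of Λ-modules. -/
def ShortExactSeq {X Y Z : ModuleCat.{u} Λ} (f : X ⟶ Y) (g : Y ⟶ Z) : Prop :=
  Function.Injective f ∧ Function.Surjective g ∧ Function.Exact f g

variable (C : Set (ModuleCat.{u} Λ))

/-- An inflation of the exact category `C`: an injective map between objects of `C`
whose cokernel lies in `C`. -/
def IsInflation {X Y : ModuleCat.{u} Λ} (f : X ⟶ Y) : Prop :=
  X ∈ C ∧ Y ∈ C ∧ Function.Injective f ∧ ∃ Z ∈ C, ∃ g : Y ⟶ Z, ShortExactSeq f g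

/-- A deflation of the exact category `C`: a surjective map between objects of `C`
whose kernel lies in `C`. -/
def IsDeflation {X Y : ModuleCat.{u} Λ} (f : X ⟶ Y) : Prop :=
  X ∈ C ∧ Y ∈ C ∧ Function.Surjective f ∧ ∃ Z ∈ C, ∃ g : Z ⟶ X, ShortExactSeq g f

/-- The monomorphism category `S(C)`, as a subcategory of the arrow category. -/
def SMono : Set (Arrow (ModuleCat.{u} Λ)) := {a | IsInflation C a.hom}

/-- The epimorphism category `F(C)`, as a subcategory of the arrow category. -/
def FEpi : Set (Arrow (ModuleCat.{u} Λ)) := {a | IsDeflation C a.hom}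

/-- `I` is a `C`-injective object. -/
def CInjective (I : ModuleCat.{u} Λ) : Prop :=
  I ∈ C ∧ ∀ (U V : ModuleCat.{u} Λ), U ∈ C → V ∈ C →
    ∀ (f : I ⟶ U) (g : U ⟶ V), ShortExactSeq f g → ∃ r : U ⟶ I, f ≫ r = 𝟙 I

/-- `P` is a `C`-projective object. -/
def CProjective (P : ModuleCat.{u} Λ) : Prop :=
  P ∈ C ∧ ∀ (U V : ModuleCat.{u} Λ), U ∈ C → V ∈ C →
    ∀ (f : U ⟶ V) (g : V ⟶ P), ShortExactSeq f g → ∃ s : P ⟶ V, s ≫ g = 𝟙 P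

/-- `C` has enough `C`-injectives. -/
def EnoughCInjectives : Prop :=
  ∀ X ∈ C, ∃ (I X' : ModuleCat.{u} Λ), CInjective C I ∧ X' ∈ C ∧
    ∃ (e : X ⟶ I) (q : I ⟶ X'), ShortExactSeq e q

/-- `C` has enough `C`-projectives. -/
def EnoughCProjectives : Prop :=
  ∀ X ∈ C, ∃ (P X' : ModuleCat.{u} Λ), CProjective C P ∧ X' ∈ C ∧
    ∃ (q : X' ⟶ P) (p : P ⟶ X), ShortExactSeq q p

def ClosedUnderIso : Prop := ∀ (M N : ModuleCat.{u} Λ), (M ≅ N) → M ∈ C → N ∈ C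
def ContainsZero : Prop := ∀ M : ModuleCat.{u} Λ, Subsingleton M → M ∈ C
def ClosedUnderSums : Prop := ∀ M N : ModuleCat.{u} Λ, M ∈ C → N ∈ C → (M ⊞ N) ∈ C
def ClosedUnderExtensions : Prop :=
  ∀ (X Y Z : ModuleCat.{u} Λ) (f : X ⟶ Y) (g : Y ⟶ Z),
    X ∈ C → Z ∈ C → ShortExactSeq f g → Y ∈ C

end Defs

section Approx
variable {A : Type*} [Category A] (D : Set A)

/-- `g : Y ⟶ Z` is a right `D`-approximation of `Z`. -/
def IsRightApprox {Y Z : A} (g : Y ⟶ Z) : Prop :=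
  Y ∈ D ∧ ∀ W ∈ D, ∀ u : W ⟶ Z, ∃ v : W ⟶ Y, v ≫ g = u

/-- `g : Z ⟶ Y` is a left `D`-approximation of `Z`. -/
def IsLeftApprox {Z Y : A} (g : Z ⟶ Y) : Prop :=
  Y ∈ D ∧ ∀ W ∈ D, ∀ u : Z ⟶ W, ∃ v : Y ⟶ W, g ≫ v = u

end Approx

section Finiteness
variable {Λ : Type u} [Ring Λ]

/-- Contravariant finiteness of `C` in `mod Λ` (the finite-dimensional Λ-modules). -/
def ContravariantlyFinite (C : Set (ModuleCat.{u} Λ)) : Prop :=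
  ∀ M : ModuleCat.{u} Λ, Module.Finite Λ M →
    ∃ (Y : ModuleCat.{u} Λ) (g : Y ⟶ M), IsRightApprox C g

/-- Covariant finiteness of `C` in `mod Λ`. -/
def CovariantlyFinite (C : Set (ModuleCat.{u} Λ)) : Prop :=
  ∀ M : ModuleCat.{u} Λ, Module.Finite Λ M →
    ∃ (Y : ModuleCat.{u} Λ) (g : M ⟶ Y), IsLeftApprox C g

end Finiteness

section ArrowAS
variable {Λ : Type u} [Ring Λ]
variable (D : Set (Arrow (ModuleCat.{u} Λ)))

/-- A conflation of the full subcategory `D` of the arrow category. -/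
def ArrowConflation {a b c : Arrow (ModuleCat.{u} Λ)} (φ : a ⟶ b) (ψ : b ⟶ c) : Prop :=
  a ∈ D ∧ b ∈ D ∧ c ∈ D ∧ ShortExactSeq φ.left ψ.left ∧ ShortExactSeq φ.right ψ.right

/-- `φ : a ⟶ b` is left almost split in `D`. -/
def ArrowLeftAlmostSplit {a b : Arrow (ModuleCat.{u} Λ)} (φ : a ⟶ b) : Prop :=
  (¬ ∃ r : b ⟶ a, φ ≫ r = 𝟙 a) ∧
  ∀ b' ∈ D, ∀ u : a ⟶ b', (¬ ∃ r : b' ⟶ a, u ≫ r = 𝟙 a) → ∃ v : b ⟶ b', φ ≫ v = u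

/-- `ψ : b ⟶ c` is right almost split in `D`. -/
def ArrowRightAlmostSplit {b c : Arrow (ModuleCat.{u} Λ)} (ψ : b ⟶ c) : Prop :=
  (¬ ∃ s : c ⟶ b, s ≫ ψ = 𝟙 c) ∧
  ∀ b' ∈ D, ∀ u : b' ⟶ c, (¬ ∃ s : c ⟶ b', s ≫ u = 𝟙 c) → ∃ v : b' ⟶ b, v ≫ ψ = u

/-- An almost split conflation in `D`. -/
def ArrowAlmostSplitConflation {a b c : Arrow (ModuleCat.{u} Λ)} (φ : a ⟶ b) (ψ : b ⟶ c) :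
    Prop :=
  ArrowConflation D φ ψ ∧ (¬ ∃ r : b ⟶ a, φ ≫ r = 𝟙 a) ∧
    ArrowLeftAlmostSplit D φ ∧ ArrowRightAlmostSplit D ψ

end ArrowAS

section ModAS
variable {Λ : Type u} [Ring Λ] (C : Set (ModuleCat.{u} Λ))

/-- `f : X ⟶ Y` is left almost split in `C`. -/
def ModLeftAlmostSplit {X Y : ModuleCat.{u} Λ} (f : X ⟶ Y) : Prop :=
  (¬ ∃ r : Y ⟶ X, f ≫ r = 𝟙 X) ∧
  ∀ Y' ∈ C, ∀ u : X ⟶ Y', (¬ ∃ r : Y' ⟶ X, u ≫ r = 𝟙 X) → ∃ v : Y ⟶ Y', f ≫ v = u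

/-- `g : Y ⟶ Z` is right almost split in `C`. -/
def ModRightAlmostSplit {Y Z : ModuleCat.{u} Λ} (g : Y ⟶ Z) : Prop :=
  (¬ ∃ s : Z ⟶ Y, s ≫ g = 𝟙 Z) ∧
  ∀ Y' ∈ C, ∀ u : Y' ⟶ Z, (¬ ∃ s : Z ⟶ Y', s ≫ u = 𝟙 Z) → ∃ v : Y' ⟶ Y, v ≫ g = u

/-- An almost split conflation `0 → X → Y → Z → 0` in `C`. -/
def ModAlmostSplitSeq {X Y Z : ModuleCat.{u} Λ} (f : X ⟶ Y) (g : Y ⟶ Z) : Prop :=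
  X ∈ C ∧ Y ∈ C ∧ Z ∈ C ∧ ShortExactSeq f g ∧ (¬ ∃ r : Y ⟶ X, f ≫ r = 𝟙 X) ∧
    ModLeftAlmostSplit C f ∧ ModRightAlmostSplit C g

end ModAS


section ASHelpers
open CategoryTheory CategoryTheory.Limits
namespace ASHelp
variable {Λ : Type u} [Ring Λ]

lemma happ {X Y : ModuleCat.{u} Λ} {p q : X ⟶ Y} (h : p = q) (t : X) : p t = q t := by rw [h]

lemma comp_eq_zero_of_exact {X Y Z : ModuleCat.{u} Λ} {p : X ⟶ Y} {q : Y ⟶ Z}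
    (hpq : Function.Exact p q) : p ≫ q = 0 := by
  apply ConcreteCategory.ext_apply
  intro x
  exact (hpq (p x)).mpr ⟨x, rfl⟩

lemma cancel_surj {X Y Z : ModuleCat.{u} Λ} (p : X ⟶ Y) (hp : Function.Surjective p)
    {f g : Y ⟶ Z} (h : p ≫ f = p ≫ g) : f = g := by
  apply ConcreteCategory.ext_apply
  intro y
  obtain ⟨x, rfl⟩ := hp y
  have := congrArg (fun m => (m : X ⟶ Z) x) h
  simpa using this

lemma factor_surj {X Y W : ModuleCat.{u} Λ} (p : X ⟶ Y) (hp : Function.Surjective p)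
    (t : X ⟶ W) (h : ∀ x, p x = 0 → t x = 0) : ∃ t' : Y ⟶ W, p ≫ t' = t := by
  have hle : LinearMap.ker p.hom ≤ LinearMap.ker t.hom := fun x hx => h x hx
  let q : (X ⧸ LinearMap.ker p.hom) →ₗ[Λ] W := Submodule.liftQ _ t.hom hle
  let e : (X ⧸ LinearMap.ker p.hom) ≃ₗ[Λ] Y := LinearMap.quotKerEquivOfSurjective p.hom hp
  refine ⟨ModuleCat.ofHom (q.comp (e.symm : Y →ₗ[Λ] (X ⧸ LinearMap.ker p.hom))), ?_⟩
  apply ConcreteCategory.ext_apply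
  intro x
  have h1 : e.symm (p x) = Submodule.Quotient.mk x := by
    apply e.injective
    simp only [LinearEquiv.apply_symm_apply]
    rfl
  show q (e.symm (p x)) = t x
  rw [h1]
  rfl

lemma factor_inj {K X A : ModuleCat.{u} Λ} (κ : K ⟶ X) (hκ : Function.Injective κ)
    (t : A ⟶ X) (h : ∀ a, t a ∈ Set.range κ) : ∃ t' : A ⟶ K, t' ≫ κ = t := by
  have h' : ∀ a, t a ∈ LinearMap.range κ.hom := fun a => by
    obtain ⟨k, hk⟩ := h a; exact ⟨k, hk⟩
  let e : K ≃ₗ[Λ] LinearMap.range κ.hom := LinearEquiv.ofInjective κ.hom hκ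
  refine ⟨ModuleCat.ofHom ((e.symm : LinearMap.range κ.hom →ₗ[Λ] K).comp (t.hom.codRestrict _ h')), ?_⟩
  apply ConcreteCategory.ext_apply
  intro a
  show κ (e.symm ⟨t a, h' a⟩) = t a
  have : κ (e.symm ⟨t a, h' a⟩) = (e (e.symm ⟨t a, h' a⟩) : X) := rfl
  rw [this, LinearEquiv.apply_symm_apply]


lemma cinj_extend (C : Set (ModuleCat.{u} Λ)) (hCext : ClosedUnderExtensions C)
    {I K X Y : ModuleCat.{u} Λ} (hI : CInjective C I) (hY : Y ∈ C)
    (κ : K ⟶ X) (x : X ⟶ Y) (hse : ShortExactSeq κ x) (m : K ⟶ I) :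
    ∃ w : X ⟶ I, κ ≫ w = m := by
  obtain ⟨hκinj, hxsurj, hexact⟩ := hse
  set ρ : K →ₗ[Λ] (↥I × ↥X) := LinearMap.prod m.hom (-κ.hom) with hρ
  set N := LinearMap.range ρ with hN
  let P := ModuleCat.of Λ ((↥I × ↥X) ⧸ N)
  let ι : I ⟶ P := ModuleCat.ofHom (N.mkQ.comp (LinearMap.inl Λ I X))
  have hker : N ≤ LinearMap.ker (x.hom.comp (LinearMap.snd Λ ↥I ↥X)) := by
    rintro ⟨i, x₀⟩ ⟨k, hk⟩
    have h1 : x₀ = -κ k := by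
      have := congrArg Prod.snd hk
      simp only [hρ, LinearMap.prod_apply, Pi.prod] at this
      exact this.symm
    simp only [LinearMap.mem_ker, LinearMap.coe_comp, Function.comp_apply, LinearMap.snd_apply]
    have : x (κ k) = 0 := (hexact (κ k)).mpr ⟨k, rfl⟩
    rw [h1]
    simp [this]
  let π : P ⟶ Y := ModuleCat.ofHom (Submodule.liftQ N (x.hom.comp (LinearMap.snd Λ ↥I ↥X)) hker)
  have hιinj : Function.Injective ι := by
    intro i₁ i₂ h
    have : ((i₁ - i₂ : ↥I), (0 : ↥X)) ∈ N := by
      have h' : Submodule.Quotient.mk (p := N) ((i₁ : ↥I), (0:↥X)) = Submodule.Quotient.mk ((i₂ : ↥I), (0:↥X)) := h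
      have := Submodule.Quotient.eq (p := N) |>.mp h'
      simpa using this
    obtain ⟨k, hk⟩ := this
    have hk2 : -κ k = 0 := congrArg Prod.snd hk
    have hk0 : k = 0 := hκinj (by simpa using hk2)
    have hk1 : m k = i₁ - i₂ := congrArg Prod.fst hk
    rw [hk0] at hk1
    simp at hk1
    exact sub_eq_zero.mp hk1.symm
  have hπsurj : Function.Surjective π := by
    intro y
    obtain ⟨x₀, rfl⟩ := hxsurj y
    exact ⟨N.mkQ (0, x₀), rfl⟩
  have hexact2 : Function.Exact ι π := by
    intro p
    induction p using Submodule.Quotient.induction_on with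
    | H v =>
      obtain ⟨i, x₀⟩ := v
      constructor
      · intro hp
        have hx0 : x x₀ = 0 := hp
        obtain ⟨k, hk⟩ := (hexact x₀).mp hx0
        refine ⟨i + m k, ?_⟩
        show Submodule.Quotient.mk (p := N) ((i + m k : ↥I), (0:↥X)) = Submodule.Quotient.mk ((i : ↥I), x₀)
        rw [Submodule.Quotient.eq]
        have h1 : ρ k = (m k, -x₀) := by rw [← hk]; rfl
        refine ⟨k, ?_⟩
        rw [h1]
        simp [Prod.ext_iff]
      · rintro ⟨i', hi'⟩
        have : π (ι i') = 0 := by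
          show x ((0 : ↥X)) = 0
          simp
        rw [hi'] at this
        exact this
  have hP : P ∈ C := hCext I P Y ι π hI.1 hY ⟨hιinj, hπsurj, hexact2⟩
  obtain ⟨r, hr⟩ := hI.2 P Y hP hY ι π ⟨hιinj, hπsurj, hexact2⟩
  refine ⟨ModuleCat.ofHom (r.hom.comp (N.mkQ.comp (LinearMap.inr Λ ↥I ↥X))), ?_⟩
  apply ConcreteCategory.ext_apply
  intro k
  show r (Submodule.Quotient.mk (p := N) ((0:↥I), κ k)) = m k
  have heq : Submodule.Quotient.mk (p := N) ((0 : ↥I), κ k) = Submodule.Quotient.mk ((m k : ↥I), (0:↥X)) := by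
    rw [Submodule.Quotient.eq]
    have h1 : ρ (-k) = (-(m k), κ k) := by
      have : ρ (-k) = (m (-k), -(κ (-k))) := rfl
      rw [this]; simp
    refine ⟨-k, ?_⟩
    rw [h1]
    simp [Prod.ext_iff]
  rw [heq]
  have := congrArg (fun t => (t : I ⟶ I) (m k)) hr
  have h2 : r.hom (ι.hom (m k)) = m k := by simpa using this
  exact h2

end ASHelp
end ASHelpers

/-- **Statement 18.** If `0 → A →f B →g Z → 0` is an almost split conflation in `C`,
`0 → A →e I →c W → 0` is a conflation with `I` `C`-injective and `e` an injective envelope,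
`e′ : B → I` extends `e` and `d₂ : Z → W` is the map with `d₂ ∘ g = −c ∘ e′`, then
`0 → (c : I → W) → (d : I ⊕ Z → W) → (Z → 0) → 0`, with `d = [c, d₂]`, is an almost
split conflation in `F(C)`. -/
theorem almost_split_fepi_ending_at_arrow_to_zero
    (k : Type u) [Field k] (Λ : Type u) [Ring Λ] [Algebra k Λ] [FiniteDimensional k Λ]
    (C : Set (ModuleCat.{u} Λ))
    (hCfd : ∀ M ∈ C, Module.Finite Λ M)
    (hC0 : ContainsZero C) (hCiso : ClosedUnderIso C)
    (hCsum : ClosedUnderSums C) (hCext : ClosedUnderExtensions C)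
    {A B Z I W : ModuleCat.{u} Λ} (f : A ⟶ B) (g : B ⟶ Z)
    (h : ModAlmostSplitSeq C f g)
    (e : A ⟶ I) (c : I ⟶ W) (hI : CInjective C I) (hW : W ∈ C)
    (hec : ShortExactSeq e c)
    (henv : ∀ φ : I ⟶ I, e ≫ φ = e → IsIso φ)
    (e' : B ⟶ I) (he' : f ≫ e' = e)
    (d₂ : Z ⟶ W) (hd₂ : g ≫ d₂ = -(e' ≫ c)) :
    ArrowAlmostSplitConflation (FEpi C)
      (a := Arrow.mk c)
      (b := Arrow.mk (biprod.desc c d₂))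
      (c := Arrow.mk (0 : Z ⟶ ModuleCat.of Λ PUnit.{u+1}))
      (Arrow.homMk (u := biprod.inl) (v := 𝟙 W) (by simp))
      (Arrow.homMk (u := biprod.snd) (v := 0) (by simp)) := by
  classical
  obtain ⟨hA, hB, hZ, ⟨hfinj, hgsurj, hfg⟩, hnonsplit, hlas, hras⟩ := h
  obtain ⟨heinj, hcsurj, hecx⟩ := hec
  have happ : ∀ {X Y : ModuleCat.{u} Λ} {p q : X ⟶ Y}, p = q → ∀ t : ↥X, p t = q t :=
    fun hpq t => ASHelp.happ hpq t
  have hfg0 : f ≫ g = 0 := ASHelp.comp_eq_zero_of_exact hfg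
  have hec0 : e ≫ c = 0 := ASHelp.comp_eq_zero_of_exact hecx
  have hptsub : ∀ (p q : (ModuleCat.of Λ PUnit.{u+1} : ModuleCat.{u} Λ)), p = q :=
    fun p q => Subsingleton.elim p q
  have hpt_hom : ∀ {V : ModuleCat.{u} Λ} (p q : V ⟶ ModuleCat.of Λ PUnit.{u+1}), p = q := by
    intro V p q
    apply ConcreteCategory.ext_apply
    intro v
    exact hptsub _ _
  -- elementwise biproduct facts
  have binlfst : ∀ i : ↥I, (biprod.fst : I ⊞ Z ⟶ I) ((biprod.inl : I ⟶ I ⊞ Z) i) = i :=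
    fun i => congrArg (fun m : I ⟶ I => m i) biprod.inl_fst
  have binlsnd : ∀ i : ↥I, (biprod.snd : I ⊞ Z ⟶ Z) ((biprod.inl : I ⟶ I ⊞ Z) i) = 0 :=
    fun i => congrArg (fun m : I ⟶ Z => m i) biprod.inl_snd
  have binrsnd : ∀ z : ↥Z, (biprod.snd : I ⊞ Z ⟶ Z) ((biprod.inr : Z ⟶ I ⊞ Z) z) = z :=
    fun z => congrArg (fun m : Z ⟶ Z => m z) biprod.inr_snd
  have btotal : ∀ t : ↥(I ⊞ Z),
      (biprod.inl : I ⟶ I ⊞ Z) ((biprod.fst : I ⊞ Z ⟶ I) t)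
        + (biprod.inr : Z ⟶ I ⊞ Z) ((biprod.snd : I ⊞ Z ⟶ Z) t) = t :=
    fun t => congrArg (fun m : I ⊞ Z ⟶ I ⊞ Z => m t) biprod.total
  have bdinl : ∀ i : ↥I, (biprod.desc c d₂) ((biprod.inl : I ⟶ I ⊞ Z) i) = c i :=
    fun i => congrArg (fun m : I ⟶ W => m i) (biprod.inl_desc c d₂)
  have bdinr : ∀ z : ↥Z, (biprod.desc c d₂) ((biprod.inr : Z ⟶ I ⊞ Z) z) = d₂ z :=
    fun z => congrArg (fun m : Z ⟶ W => m z) (biprod.inr_desc c d₂)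
  have blfst : ∀ b1 : ↥B, (biprod.fst : I ⊞ Z ⟶ I) ((biprod.lift e' g) b1) = e' b1 :=
    fun b1 => congrArg (fun m : B ⟶ I => m b1) (biprod.lift_fst e' g)
  have blsnd : ∀ b1 : ↥B, (biprod.snd : I ⊞ Z ⟶ Z) ((biprod.lift e' g) b1) = g b1 :=
    fun b1 => congrArg (fun m : B ⟶ Z => m b1) (biprod.lift_snd e' g)
  have hdesc_el : ∀ t : ↥(I ⊞ Z), (biprod.desc c d₂) t
      = c ((biprod.fst : I ⊞ Z ⟶ I) t) + d₂ ((biprod.snd : I ⊞ Z ⟶ Z) t) := by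
    intro t
    conv_lhs => rw [← btotal t]
    rw [map_add, bdinl, bdinr]
  have hd₂g : ∀ b1 : ↥B, d₂ (g b1) = -(c (e' b1)) := fun b1 => happ hd₂ b1
  have hef : ∀ a : ↥A, e' (f a) = e a := fun a => happ he' a
  -- left short exact sequence
  have hsesL : ShortExactSeq (biprod.inl : I ⟶ I ⊞ Z) (biprod.snd : I ⊞ Z ⟶ Z) := by
    refine ⟨?_, ?_, ?_⟩
    · intro a b hab
      have h1 : (biprod.fst : I ⊞ Z ⟶ I) ((biprod.inl : I ⟶ I ⊞ Z) a)
          = (biprod.fst : I ⊞ Z ⟶ I) ((biprod.inl : I ⟶ I ⊞ Z) b) := congrArg _ hab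
      rwa [binlfst, binlfst] at h1
    · intro z; exact ⟨(biprod.inr : Z ⟶ I ⊞ Z) z, binrsnd z⟩
    · intro t
      constructor
      · intro ht
        refine ⟨(biprod.fst : I ⊞ Z ⟶ I) t, ?_⟩
        have h1 := btotal t
        rw [ht, map_zero, add_zero] at h1
        exact h1
      · rintro ⟨i, rfl⟩
        exact binlsnd i
  -- right short exact sequence
  have hsesR : ShortExactSeq (𝟙 W) (0 : W ⟶ ModuleCat.of Λ PUnit.{u+1}) :=
    ⟨fun a b hab => hab, fun y => ⟨0, hptsub _ _⟩,
      fun w => ⟨fun _ => ⟨w, rfl⟩, fun _ => hptsub _ _⟩⟩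
  -- membership of the three arrows in F(C)
  have ha : Arrow.mk c ∈ FEpi C := ⟨hI.1, hW, hcsurj, A, hA, e, heinj, hcsurj, hecx⟩
  have hβd : ShortExactSeq (biprod.lift e' g) (biprod.desc c d₂) := by
    refine ⟨?_, ?_, ?_⟩
    · intro b1 b2 hb12
      have h1 : e' b1 = e' b2 := by
        have h0 : (biprod.fst : I ⊞ Z ⟶ I) ((biprod.lift e' g) b1)
            = (biprod.fst : I ⊞ Z ⟶ I) ((biprod.lift e' g) b2) := congrArg _ hb12
        rwa [blfst, blfst] at h0
      have h2 : g b1 = g b2 := by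
        have h0 : (biprod.snd : I ⊞ Z ⟶ Z) ((biprod.lift e' g) b1)
            = (biprod.snd : I ⊞ Z ⟶ Z) ((biprod.lift e' g) b2) := congrArg _ hb12
        rwa [blsnd, blsnd] at h0
      have hg0 : g (b1 - b2) = 0 := by rw [map_sub, h2, sub_self]
      obtain ⟨a, ha'⟩ := (hfg (b1 - b2)).mp hg0
      have he'0 : e' (b1 - b2) = 0 := by rw [map_sub, h1, sub_self]
      have hea : e a = 0 := by rw [← hef a, ha', he'0]
      have ha0 : a = 0 := heinj (by rw [hea, map_zero])
      have hsub : b1 - b2 = 0 := by rw [← ha', ha0, map_zero]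
      exact sub_eq_zero.mp hsub
    · intro w0
      obtain ⟨i, hi⟩ := hcsurj w0
      exact ⟨(biprod.inl : I ⟶ I ⊞ Z) i, by rw [bdinl]; exact hi⟩
    · intro t
      constructor
      · intro ht
        have h1 : c ((biprod.fst : I ⊞ Z ⟶ I) t) + d₂ ((biprod.snd : I ⊞ Z ⟶ Z) t) = 0 := by
          rw [← hdesc_el t]; exact ht
        obtain ⟨b1, hb1⟩ := hgsurj ((biprod.snd : I ⊞ Z ⟶ Z) t)
        have hci' : c ((biprod.fst : I ⊞ Z ⟶ I) t - e' b1) = 0 := by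
          rw [map_sub]
          have h2 : c (e' b1) = -(d₂ ((biprod.snd : I ⊞ Z ⟶ Z) t)) := by
            rw [← hb1, hd₂g b1, neg_neg]
          rw [h2, sub_neg_eq_add, h1]
        obtain ⟨a, ha2⟩ := (hecx _).mp hci'
        refine ⟨b1 + f a, ?_⟩
        have hgf0 : g (f a) = 0 := (hfg (f a)).mpr ⟨a, rfl⟩
        have hL1 : e' (b1 + f a) = (biprod.fst : I ⊞ Z ⟶ I) t := by
          rw [map_add, hef a, ha2]
          abel
        have hL2 : g (b1 + f a) = (biprod.snd : I ⊞ Z ⟶ Z) t := by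
          rw [map_add, hgf0, add_zero, hb1]
        calc (biprod.lift e' g) (b1 + f a)
            = (biprod.inl : I ⟶ I ⊞ Z) ((biprod.fst : I ⊞ Z ⟶ I) ((biprod.lift e' g) (b1 + f a)))
              + (biprod.inr : Z ⟶ I ⊞ Z) ((biprod.snd : I ⊞ Z ⟶ Z) ((biprod.lift e' g) (b1 + f a))) :=
              (btotal _).symm
          _ = (biprod.inl : I ⟶ I ⊞ Z) ((biprod.fst : I ⊞ Z ⟶ I) t)
              + (biprod.inr : Z ⟶ I ⊞ Z) ((biprod.snd : I ⊞ Z ⟶ Z) t) := by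
              rw [blfst, blsnd, hL1, hL2]
          _ = t := btotal t
      · rintro ⟨b1, rfl⟩
        have hld : biprod.lift e' g ≫ biprod.desc c d₂ = 0 := by
          rw [biprod.lift_desc, hd₂]
          exact add_neg_cancel _
        exact happ hld b1
  have hbmem : Arrow.mk (biprod.desc c d₂) ∈ FEpi C :=
    ⟨hCsum I Z hI.1 hZ, hW, hβd.2.1, B, hB, biprod.lift e' g, hβd⟩
  have hccmem : Arrow.mk (0 : Z ⟶ ModuleCat.of Λ PUnit.{u+1}) ∈ FEpi C :=
    ⟨hZ, hC0 _ ⟨hptsub⟩, fun y => ⟨0, hptsub _ _⟩, Z, hZ, 𝟙 Z,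
      ⟨fun a b hab => hab, fun y => ⟨0, hptsub _ _⟩,
        fun z => ⟨fun _ => ⟨z, rfl⟩, fun _ => hptsub _ _⟩⟩⟩
  -- key splitting argument
  have keysplit : ∀ σ : Z ⟶ I, (∀ z : ↥Z, c (σ z) = d₂ z) → False := by
    intro σ hσ
    have hs0 : ∀ b1 : ↥B, c ((e' + g ≫ σ) b1) = 0 := by
      intro b1
      show c (e' b1 + σ (g b1)) = 0
      rw [map_add, hσ (g b1), hd₂g b1]
      exact add_neg_cancel _
    obtain ⟨t, ht⟩ := ASHelp.factor_inj e heinj (e' + g ≫ σ) (fun b1 => (hecx _).mp (hs0 b1))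
    apply hnonsplit
    refine ⟨t, ?_⟩
    apply ConcreteCategory.ext_apply
    intro a
    show t (f a) = a
    apply heinj
    have h2 : e (t (f a)) = (e' + g ≫ σ) (f a) := happ ht (f a)
    rw [h2]
    show e' (f a) + σ (g (f a)) = e a
    have h3 : g (f a) = 0 := (hfg (f a)).mpr ⟨a, rfl⟩
    rw [hef a, h3, map_zero, add_zero]
  -- the sequence is not split (first map is not a split mono)
  have hns : ¬ ∃ r : Arrow.mk (biprod.desc c d₂) ⟶ Arrow.mk c,
      (Arrow.homMk (u := biprod.inl) (v := 𝟙 W) (by simp) :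
        Arrow.mk c ⟶ Arrow.mk (biprod.desc c d₂)) ≫ r = 𝟙 (Arrow.mk c) := by
    rintro ⟨r, hr⟩
    have hrl : biprod.inl ≫ r.left = 𝟙 I := congrArg CommaMorphism.left hr
    have hrr : 𝟙 W ≫ r.right = 𝟙 W := congrArg CommaMorphism.right hr
    rw [Category.id_comp] at hrr
    have hcomm : r.left ≫ c = biprod.desc c d₂ ≫ r.right := r.w
    have hσ : (biprod.inr ≫ r.left) ≫ c = d₂ := by
      rw [Category.assoc, hcomm, hrr, Category.comp_id, biprod.inr_desc]
    exact keysplit _ (fun z => happ hσ z)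
  -- the last map is not a split epi
  have hψns : ¬ ∃ s : Arrow.mk (0 : Z ⟶ ModuleCat.of Λ PUnit.{u+1}) ⟶ Arrow.mk (biprod.desc c d₂),
      s ≫ (Arrow.homMk (u := biprod.snd) (v := 0) (by simp) :
        Arrow.mk (biprod.desc c d₂) ⟶ Arrow.mk (0 : Z ⟶ ModuleCat.of Λ PUnit.{u+1}))
        = 𝟙 (Arrow.mk (0 : Z ⟶ ModuleCat.of Λ PUnit.{u+1})) := by
    rintro ⟨s, hs⟩
    have hsl : s.left ≫ biprod.snd = 𝟙 Z := congrArg CommaMorphism.left hs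
    have hsd : s.left ≫ biprod.desc c d₂ = 0 := by
      have h1 := s.w
      simpa using h1
    apply keysplit (-(s.left ≫ biprod.fst))
    intro z
    have ht' : (biprod.desc c d₂) (s.left z) = 0 := happ hsd z
    have h2 := hdesc_el (s.left z)
    have h3 : (biprod.snd : I ⊞ Z ⟶ Z) (s.left z) = z := happ hsl z
    rw [h3, ht'] at h2
    have h4 : c ((biprod.fst : I ⊞ Z ⟶ I) (s.left z)) = -(d₂ z) :=
      eq_neg_of_add_eq_zero_left h2.symm
    show c (-((biprod.fst : I ⊞ Z ⟶ I) (s.left z))) = d₂ z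
    rw [map_neg, h4, neg_neg]
  -- left almost split
  have hLAS2 : ∀ b' ∈ FEpi C, ∀ u : Arrow.mk c ⟶ b',
      (¬ ∃ r : b' ⟶ Arrow.mk c, u ≫ r = 𝟙 (Arrow.mk c)) →
      ∃ v : Arrow.mk (biprod.desc c d₂) ⟶ b',
        (Arrow.homMk (u := biprod.inl) (v := 𝟙 W) (by simp) :
          Arrow.mk c ⟶ Arrow.mk (biprod.desc c d₂)) ≫ v = u := by
    intro b' hb' u hu
    obtain ⟨hXC, hYC, hxsurj, K, hKC, κ, hκse⟩ := hb'
    change K ⟶ b'.left at κ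
    have hκinj := hκse.1
    have hκexact := hκse.2.2
    have hκx0 : κ ≫ b'.hom = 0 := ASHelp.comp_eq_zero_of_exact hκexact
    have huw : u.left ≫ b'.hom = c ≫ u.right := u.w
    have hrange : ∀ a : ↥A, (e ≫ u.left) a ∈ Set.range κ := by
      intro a
      apply (hκexact (u.left (e a))).mp
      have h1 : b'.hom (u.left (e a)) = u.right (c (e a)) := happ huw (e a)
      have h2 : c (e a) = 0 := (hecx (e a)).mpr ⟨a, rfl⟩
      show b'.hom (u.left (e a)) = 0
      rw [h1, h2, map_zero]
    obtain ⟨ub, hub⟩ := ASHelp.factor_inj κ hκinj (e ≫ u.left) hrange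
    by_cases hsm : ∃ p : K ⟶ A, ub ≫ p = 𝟙 A
    · exfalso
      apply hu
      obtain ⟨p, hp⟩ := hsm
      obtain ⟨ρ, hρ⟩ := ASHelp.cinj_extend C hCext hI hYC κ b'.hom hκse (p ≫ e)
      have hφ : e ≫ u.left ≫ ρ = e := by
        calc e ≫ u.left ≫ ρ = (e ≫ u.left) ≫ ρ := by rw [Category.assoc]
          _ = (ub ≫ κ) ≫ ρ := by rw [hub]
          _ = ub ≫ (κ ≫ ρ) := by rw [Category.assoc]
          _ = ub ≫ p ≫ e := by rw [hρ]
          _ = (ub ≫ p) ≫ e := by rw [Category.assoc]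
          _ = e := by rw [hp, Category.id_comp]
      have hiso : IsIso (u.left ≫ ρ) := henv _ hφ
      have heinv : e ≫ inv (u.left ≫ ρ) = e := by
        calc e ≫ inv (u.left ≫ ρ) = (e ≫ (u.left ≫ ρ)) ≫ inv (u.left ≫ ρ) := by rw [hφ]
          _ = e ≫ ((u.left ≫ ρ) ≫ inv (u.left ≫ ρ)) := by rw [Category.assoc]
          _ = e := by rw [IsIso.hom_inv_id, Category.comp_id]
      have hu1r1 : u.left ≫ (ρ ≫ inv (u.left ≫ ρ)) = 𝟙 I := by
        rw [← Category.assoc]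
        exact IsIso.hom_inv_id _
      have hκr1c : κ ≫ (ρ ≫ inv (u.left ≫ ρ)) ≫ c = 0 := by
        calc κ ≫ (ρ ≫ inv (u.left ≫ ρ)) ≫ c
            = ((κ ≫ ρ) ≫ inv (u.left ≫ ρ)) ≫ c := by simp only [Category.assoc]
          _ = (((p ≫ e)) ≫ inv (u.left ≫ ρ)) ≫ c := by rw [hρ]
          _ = (p ≫ (e ≫ inv (u.left ≫ ρ))) ≫ c := by simp only [Category.assoc]
          _ = (p ≫ e) ≫ c := by rw [heinv]
          _ = p ≫ (e ≫ c) := by rw [Category.assoc]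
          _ = 0 := by rw [hec0, comp_zero]
      obtain ⟨r₂, hr₂⟩ := ASHelp.factor_surj b'.hom hxsurj ((ρ ≫ inv (u.left ≫ ρ)) ≫ c)
        (fun χ hχ => by
          obtain ⟨k, hk⟩ := (hκexact χ).mp hχ
          rw [← hk]
          exact happ hκr1c k)
      have hu2r2 : u.right ≫ r₂ = 𝟙 W := by
        apply ASHelp.cancel_surj c hcsurj
        calc c ≫ u.right ≫ r₂ = (c ≫ u.right) ≫ r₂ := by rw [Category.assoc]
          _ = (u.left ≫ b'.hom) ≫ r₂ := by rw [huw]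
          _ = u.left ≫ (b'.hom ≫ r₂) := by rw [Category.assoc]
          _ = u.left ≫ ((ρ ≫ inv (u.left ≫ ρ)) ≫ c) := by rw [hr₂]
          _ = (u.left ≫ (ρ ≫ inv (u.left ≫ ρ))) ≫ c := by simp only [Category.assoc]
          _ = 𝟙 I ≫ c := by rw [hu1r1]
          _ = c ≫ 𝟙 W := by rw [Category.id_comp, Category.comp_id]
      exact ⟨Arrow.homMk (u := ρ ≫ inv (u.left ≫ ρ)) (v := r₂) hr₂.symm,
        Arrow.hom_ext _ _ hu1r1 hu2r2⟩
    · obtain ⟨t, ht⟩ := hlas.2 K hKC ub hsm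
      have hfn : f ≫ ((t ≫ κ - e' ≫ u.left : B ⟶ b'.left)) = 0 := by
        have h1 : f ≫ ((t ≫ κ - e' ≫ u.left : B ⟶ b'.left)) = (f ≫ t) ≫ κ - (f ≫ e') ≫ u.left := by
          rw [Preadditive.comp_sub, Category.assoc, Category.assoc]
        rw [h1, ht, hub, he']
        exact sub_self _
      obtain ⟨w, hw⟩ := ASHelp.factor_surj g hgsurj ((t ≫ κ - e' ≫ u.left : B ⟶ b'.left)) (fun b1 hb1 => by
        obtain ⟨a, ha'⟩ := (hfg b1).mp hb1
        rw [← ha']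
        exact happ hfn a)
      have hwx : w ≫ b'.hom = d₂ ≫ u.right := by
        apply ASHelp.cancel_surj g hgsurj
        calc g ≫ w ≫ b'.hom = (g ≫ w) ≫ b'.hom := by rw [Category.assoc]
          _ = ((t ≫ κ - e' ≫ u.left : B ⟶ b'.left)) ≫ b'.hom := by rw [hw]
          _ = t ≫ (κ ≫ b'.hom) - e' ≫ (u.left ≫ b'.hom) := by
              rw [Preadditive.sub_comp, Category.assoc, Category.assoc]
          _ = -(e' ≫ (c ≫ u.right)) := by rw [hκx0, comp_zero, huw, zero_sub]
          _ = (-(e' ≫ c)) ≫ u.right := by rw [Preadditive.neg_comp, Category.assoc]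
          _ = (g ≫ d₂) ≫ u.right := by rw [hd₂]
          _ = g ≫ d₂ ≫ u.right := by rw [Category.assoc]
      refine ⟨Arrow.homMk (u := biprod.desc u.left w) (v := u.right) ?_, ?_⟩
      · show biprod.desc u.left w ≫ b'.hom = biprod.desc c d₂ ≫ u.right
        apply biprod.hom_ext'
        · rw [← Category.assoc, ← Category.assoc, biprod.inl_desc, biprod.inl_desc]
          exact huw
        · rw [← Category.assoc, ← Category.assoc, biprod.inr_desc, biprod.inr_desc]
          exact hwx
      · exact Arrow.hom_ext _ _ (biprod.inl_desc _ _) (Category.id_comp _)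
  -- right almost split
  have hRAS2 : ∀ b' ∈ FEpi C, ∀ u : b' ⟶ Arrow.mk (0 : Z ⟶ ModuleCat.of Λ PUnit.{u+1}),
      (¬ ∃ s : Arrow.mk (0 : Z ⟶ ModuleCat.of Λ PUnit.{u+1}) ⟶ b',
        s ≫ u = 𝟙 (Arrow.mk (0 : Z ⟶ ModuleCat.of Λ PUnit.{u+1}))) →
      ∃ v : b' ⟶ Arrow.mk (biprod.desc c d₂),
        v ≫ (Arrow.homMk (u := biprod.snd) (v := 0) (by simp) :
          Arrow.mk (biprod.desc c d₂) ⟶ Arrow.mk (0 : Z ⟶ ModuleCat.of Λ PUnit.{u+1})) = u := by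
    intro b' hb' u hu
    obtain ⟨hXC, hYC, hxsurj, K, hKC, κ, hκse⟩ := hb'
    change K ⟶ b'.left at κ
    have hκx0 : κ ≫ b'.hom = 0 := ASHelp.comp_eq_zero_of_exact hκse.2.2
    have hnsp : ¬ ∃ s' : Z ⟶ K, s' ≫ (κ ≫ u.left) = 𝟙 Z := by
      rintro ⟨s', hs'⟩
      apply hu
      refine ⟨Arrow.homMk (u := s' ≫ κ) (v := (0 : ModuleCat.of Λ PUnit.{u+1} ⟶ b'.right)) ?_, ?_⟩
      · rw [Category.assoc, hκx0, comp_zero, comp_zero]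
      · refine Arrow.hom_ext _ _ ?_ ?_
        · show (s' ≫ κ) ≫ u.left = 𝟙 Z
          rw [Category.assoc]
          exact hs'
        · exact hpt_hom _ _
    obtain ⟨q, hq⟩ := hras.2 K hKC (κ ≫ u.left) hnsp
    obtain ⟨w, hw⟩ := ASHelp.cinj_extend C hCext hI hYC κ b'.hom hκse (q ≫ e')
    have hker : κ ≫ ((w ≫ c + u.left ≫ d₂ : b'.left ⟶ W)) = 0 := by
      rw [Preadditive.comp_add]
      have h1 : κ ≫ w ≫ c = (q ≫ e') ≫ c := by rw [← Category.assoc, hw]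
      have h2 : κ ≫ u.left ≫ d₂ = (q ≫ g) ≫ d₂ := by rw [← Category.assoc, hq]
      rw [h1, h2, Category.assoc, Category.assoc, hd₂, ← Preadditive.comp_add]
      rw [add_neg_cancel, comp_zero]
    obtain ⟨v₂, hv₂⟩ := ASHelp.factor_surj b'.hom hxsurj ((w ≫ c + u.left ≫ d₂ : b'.left ⟶ W)) (fun χ hχ => by
      obtain ⟨k, hk⟩ := (hκse.2.2 χ).mp hχ
      rw [← hk]
      exact happ hker k)
    refine ⟨Arrow.homMk (u := biprod.lift w u.left) (v := v₂) ?_, ?_⟩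
    · show biprod.lift w u.left ≫ biprod.desc c d₂ = b'.hom ≫ v₂
      rw [biprod.lift_desc, hv₂]
    · refine Arrow.hom_ext _ _ ?_ ?_
      · show biprod.lift w u.left ≫ biprod.snd = u.left
        exact biprod.lift_snd _ _
      · exact hpt_hom _ _
  exact ⟨⟨ha, hbmem, hccmem, hsesL, hsesR⟩, hns, ⟨hns, hLAS2⟩, ⟨hψns, hRAS2⟩⟩
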